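/- Let n ≥ 1 and let x_1, …, x_n ∈ (0,∞) with empirical distribution function 𝔽(r) := (1/n)·#{i : x_i ≤ r}. Let 𝒦 denote the set of all functions h : [0,∞) → ℝ that are convex on [0,∞) and Lebesgue integrable over [0,∞). Suppose f̂ ∈ 𝒦 is square-integrable and minimizes Φ(h) := ∫_0^∞ h(x)² dx − (2/n)·∑_{i=1}^n h(x_i) over all square-integrable h ∈ 𝒦, and that there are points 0 = t_0 < t_1 < … < t_m with t_m > max_i x_i such that f̂ is affine on each interval [t_{k−1}, t_k], f̂ = 0 on [t_m, ∞), and at each t_k (1 ≤ k ≤ m) the right derivative of f̂ is strictly larger than the left derivative. Let F̂(r) := ∫_0^r f̂(x) dx. Then for every k ∈ {0, 1, …, m−1} and every r ∈ (t_k, t_{k+1}], ∫_{t_k}^r 𝔽(x) dx ≤ ∫_{t_k}^r F̂(x) dx. -/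

import Mathlib

open MeasureTheory Set

/- ### Auxiliary lemmas -/

private lemma slope_lemma1 {f : ℝ → ℝ} {p q w : ℝ} (h1 : p < q) (h2 : q < w)
    (h : (f q - f p) / (q - p) ≤ (f w - f q) / (w - q)) :
    (f w - f p) / (w - p) ≤ (f w - f q) / (w - q) := by
  rw [div_le_div_iff₀ (by linarith) (by linarith)] at h ⊢
  nlinarith [h]

private lemma slope_lemma2 {f : ℝ → ℝ} {p q w : ℝ} (h1 : p < q) (h2 : q < w)
    (h : (f q - f p) / (q - p) ≤ (f w - f q) / (w - q)) :
    (f q - f p) / (q - p) ≤ (f w - f p) / (w - p) := by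
  rw [div_le_div_iff₀ (by linarith) (by linarith)] at h ⊢
  nlinarith [h]

private lemma convexOn_congr' {s : Set ℝ} {f g : ℝ → ℝ} (hf : ConvexOn ℝ s f)
    (h : ∀ x ∈ s, f x = g x) : ConvexOn ℝ s g :=
  ⟨hf.1, fun x hx y hy a b ha hb hab => by
    rw [← h x hx, ← h y hy, ← h _ (hf.1 hx hy ha hb hab)]
    exact hf.2 hx hy ha hb hab⟩

private lemma convexOn_affine {s : Set ℝ} (hs : Convex ℝ s) (c d : ℝ) :
    ConvexOn ℝ s (fun u => c * u + d) := by
  refine ⟨hs, fun x _ y _ a b _ _ hab => le_of_eq ?_⟩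
  simp only [smul_eq_mul]
  linear_combination (-d) * hab

/-- Slope of an affine function. -/
private lemma affine_slope {f : ℝ → ℝ} {c d α β : ℝ}
    (h : ∀ y ∈ Icc c d, f y = α * y + β) {p q : ℝ} (hp : p ∈ Icc c d) (hq : q ∈ Icc c d)
    (hpq : p ≠ q) : (f q - f p) / (q - p) = α := by
  rw [h p hp, h q hq]
  have : q - p ≠ 0 := sub_ne_zero.mpr (Ne.symm hpq)
  field_simp
  ring

/-- Key convexity lemma: subtracting a small multiple of `(· - a)⁺` from a convex function
with a strict kink at `a` preserves convexity. -/
private lemma convexOn_sub_kink {f : ℝ → ℝ} {c a d α₁ β₁ α₂ β₂ l : ℝ}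
    (hf : ConvexOn ℝ (Ici 0) f) (hc : 0 ≤ c) (hca : c < a) (had : a < d)
    (h1 : ∀ y ∈ Icc c a, f y = α₁ * y + β₁) (h2 : ∀ y ∈ Icc a d, f y = α₂ * y + β₂)
    (hl : 0 ≤ l) (hgap : α₁ + l ≤ α₂) :
    ConvexOn ℝ (Ici 0) (fun u => f u - l * max (u - a) 0) := by
  have ha0 : (0:ℝ) ≤ a := hc.trans hca.le
  set g : ℝ → ℝ := fun u => f u - l * max (u - a) 0 with hg
  have hg_le : ∀ u, u ≤ a → g u = f u := by
    intro u hu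
    simp only [hg, max_eq_right (by linarith : u - a ≤ 0), mul_zero, sub_zero]
  have hg_ge : ∀ u, a ≤ u → g u = f u - l * (u - a) := by
    intro u hu
    simp only [hg, max_eq_left (by linarith : (0:ℝ) ≤ u - a)]
  have hdiv : ∀ p q : ℝ, p < q →
      ((f q - l * (q - a)) - (f p - l * (p - a))) / (q - p) = (f q - f p) / (q - p) - l := by
    intro p q h
    have hq : q - p ≠ 0 := sub_ne_zero.mpr h.ne'
    field_simp
    ring
  -- slope of f left of a is at most α₁
  have key_left : ∀ p, 0 ≤ p → p < a → (f a - f p) / (a - p) ≤ α₁ := by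
    intro p hp hpa
    rcases le_or_gt c p with hcp | hcp
    · exact le_of_eq (affine_slope h1 ⟨hcp, hpa.le⟩ ⟨hca.le, le_refl a⟩ hpa.ne)
    · have hmono := hf.slope_mono_adjacent (mem_Ici.mpr hp) (mem_Ici.mpr ha0) hcp hca
      have := slope_lemma1 hcp hca hmono
      calc (f a - f p) / (a - p) ≤ (f a - f c) / (a - c) := this
        _ = α₁ := affine_slope h1 ⟨le_refl c, hca.le⟩ ⟨hca.le, le_refl a⟩ hca.ne
  -- slope of f right of a is at least α₂
  have key_right : ∀ q, a < q → α₂ ≤ (f q - f a) / (q - a) := by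
    intro q haq
    rcases le_or_gt q d with hqd | hqd
    · exact le_of_eq (affine_slope h2 ⟨le_refl a, had.le⟩ ⟨haq.le, hqd⟩ haq.ne).symm
    · have hmono := hf.slope_mono_adjacent (mem_Ici.mpr ha0) (mem_Ici.mpr (by linarith))
        had hqd
      have := slope_lemma2 had hqd hmono
      calc α₂ = (f d - f a) / (d - a) :=
            (affine_slope h2 ⟨le_refl a, had.le⟩ ⟨had.le, le_refl d⟩ had.ne).symm
        _ ≤ (f q - f a) / (q - a) := this
  -- the crossing condition for g
  have K : ∀ p q, 0 ≤ p → p < a → a < q →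
      (g a - g p) / (a - p) ≤ (g q - g a) / (q - a) := by
    intro p q hp hpa haq
    have e1 : (g a - g p) / (a - p) = (f a - f p) / (a - p) := by
      rw [hg_le p hpa.le, hg_le a (le_refl a)]
    have e2 : (g q - g a) / (q - a) = (f q - f a) / (q - a) - l := by
      rw [hg_ge q haq.le, hg_ge a (le_refl a)]
      exact hdiv a q haq
    rw [e1, e2]
    have := key_left p hp hpa
    have := key_right q haq
    linarith
  apply convexOn_of_slope_mono_adjacent (convex_Ici 0)
  intro x y z hx hz hxy hyz
  have hx0 : (0:ℝ) ≤ x := hx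
  have hy0 : (0:ℝ) ≤ y := by linarith
  show (g y - g x) / (y - x) ≤ (g z - g y) / (z - y)
  rcases le_or_gt z a with hza | hza
  · -- all points ≤ a
    rw [hg_le x (by linarith), hg_le y (by linarith), hg_le z hza]
    exact hf.slope_mono_adjacent hx hz hxy hyz
  rcases le_or_gt a x with hax | hax
  · -- all points ≥ a
    rw [hg_ge x hax, hg_ge y (by linarith), hg_ge z (by linarith), hdiv x y hxy, hdiv y z hyz]
    have := hf.slope_mono_adjacent hx hz hxy hyz
    linarith
  · -- x < a < z
    rcases lt_trichotomy y a with hya | hya | hya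
    · -- x < y < a < z
      have s1 : (g y - g x) / (y - x) ≤ (g a - g y) / (a - y) := by
        rw [hg_le x (by linarith), hg_le y (by linarith), hg_le a (le_refl a)]
        exact hf.slope_mono_adjacent hx (mem_Ici.mpr ha0) hxy hya
      have s2 := K y z hy0 hya hza
      have s3 := slope_lemma2 (f := g) hya hza s2
      linarith
    · subst hya
      exact K x z hx0 hax hza
    · -- x < a < y < z
      have s2 := K x y hx0 hax hya
      have s3 := slope_lemma1 (f := g) hax hya s2
      have s4 : (g y - g a) / (y - a) ≤ (g z - g y) / (z - y) := by
        rw [hg_ge a (le_refl a), hg_ge y hya.le, hg_ge z (by linarith),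
          hdiv a y hya, hdiv y z hyz]
        have := hf.slope_mono_adjacent (mem_Ici.mpr ha0) hz hya hyz
        linarith
      linarith

/-- `derivWithin` from the left of an affine piece. -/
private lemma derivWithin_affine_left {f : ℝ → ℝ} {c a α β : ℝ} (hca : c < a)
    (h : ∀ y ∈ Icc c a, f y = α * y + β) : derivWithin f (Iic a) a = α := by
  have hmem : Icc c a ∈ nhdsWithin a (Iic a) := by
    rw [mem_nhdsWithin]
    exact ⟨Ioi c, isOpen_Ioi, hca, fun y hy => ⟨le_of_lt hy.1, hy.2⟩⟩
  have haff : HasDerivWithinAt (fun y => α * y + β) α (Iic a) a := by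
    simpa using (((hasDerivAt_id a).const_mul α).add_const β).hasDerivWithinAt
  have hd : HasDerivWithinAt f α (Iic a) a :=
    haff.congr_of_eventuallyEq
      (Filter.eventuallyEq_of_mem hmem (fun y hy => h y hy))
      (h a ⟨hca.le, le_refl a⟩)
  exact hd.derivWithin (uniqueDiffOn_Iic a a self_mem_Iic)

/-- `derivWithin` from the right of an affine piece. -/
private lemma derivWithin_affine_right {f : ℝ → ℝ} {a d α β : ℝ} (had : a < d)
    (h : ∀ y ∈ Icc a d, f y = α * y + β) : derivWithin f (Ici a) a = α := by
  have hmem : Icc a d ∈ nhdsWithin a (Ici a) := by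
    rw [mem_nhdsWithin]
    exact ⟨Iio d, isOpen_Iio, had, fun y hy => ⟨hy.2, le_of_lt hy.1⟩⟩
  have haff : HasDerivWithinAt (fun y => α * y + β) α (Ici a) a := by
    simpa using (((hasDerivAt_id a).const_mul α).add_const β).hasDerivWithinAt
  have hd : HasDerivWithinAt f α (Ici a) a :=
    haff.congr_of_eventuallyEq
      (Filter.eventuallyEq_of_mem hmem (fun y hy => h y hy))
      (h a ⟨le_refl a, had.le⟩)
  exact hd.derivWithin (uniqueDiffOn_Ici a a self_mem_Ici)

private lemma step_monotone (c : ℝ) : Monotone (fun u : ℝ => if c ≤ u then (1:ℝ) else 0) := by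
  intro u v huv
  dsimp only
  by_cases h : c ≤ u
  · rw [if_pos h, if_pos (h.trans huv)]
  · rw [if_neg h]
    split_ifs <;> norm_num

/-- Integral of a step function over an interval. -/
private lemma step_integral {c p q : ℝ} (hpq : p ≤ q) :
    (∫ u in p..q, (if c ≤ u then (1:ℝ) else 0)) = min (q - p) (max (q - c) 0) := by
  rcases lt_or_ge q c with hqc | hcq
  · -- q < c : integral is 0
    rw [intervalIntegral.integral_of_le hpq,
      setIntegral_congr_fun measurableSet_Ioc
        (fun u hu => if_neg (by simp only [not_le]; exact lt_of_le_of_lt hu.2 hqc)),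
      integral_zero, max_eq_right (by linarith), min_eq_right (by linarith)]
  rcases le_or_gt c p with hcp | hpc
  · -- c ≤ p : integrand is 1 on (p, q]
    rw [intervalIntegral.integral_of_le hpq,
      setIntegral_congr_fun measurableSet_Ioc
        (fun u hu => if_pos (hcp.trans hu.1.le)),
      setIntegral_const]
    rw [Real.volume_real_Ioc_of_le (by linarith), smul_eq_mul, mul_one,
      min_eq_left (le_trans (by linarith : q - p ≤ q - c) (le_max_left _ _))]
  · -- p < c ≤ q
    have hint : ∀ p' q' : ℝ, IntervalIntegrable (fun u : ℝ => if c ≤ u then (1:ℝ) else 0)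
        volume p' q' := fun p' q' => (step_monotone c).intervalIntegrable
    rw [← intervalIntegral.integral_add_adjacent_intervals (hint p c) (hint c q)]
    have e1 : (∫ u in p..c, (if c ≤ u then (1:ℝ) else 0)) = 0 := by
      rw [intervalIntegral.integral_of_le hpc.le, integral_Ioc_eq_integral_Ioo,
        setIntegral_congr_fun measurableSet_Ioo
          (fun u hu => if_neg (not_le.mpr hu.2)),
        integral_zero]
    have e2 : (∫ u in c..q, (if c ≤ u then (1:ℝ) else 0)) = q - c := by
      rw [intervalIntegral.integral_of_le hcq,
        setIntegral_congr_fun measurableSet_Ioc (fun u hu => if_pos hu.1.le),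
        setIntegral_const, Real.volume_real_Ioc_of_le (by linarith),
        smul_eq_mul, mul_one]
    rw [e1, e2, zero_add, max_eq_left (by linarith),
      min_eq_right (by linarith)]

/-- Integral of a quadratic polynomial. -/
private lemma poly_integral (a r C D E : ℝ) :
    (∫ u in a..r, (C + D * u + E * u ^ 2)) =
      C * (r - a) + D * ((r ^ 2 - a ^ 2) / 2) + E * ((r ^ 3 - a ^ 3) / 3) := by
  have i1 : IntervalIntegrable (fun u : ℝ => C + D * u) volume a r :=
    (continuous_const.add (continuous_const.mul continuous_id)).intervalIntegrable _ _
  have i2 : IntervalIntegrable (fun u : ℝ => E * u ^ 2) volume a r :=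
    (continuous_const.mul (continuous_pow 2)).intervalIntegrable _ _
  have i3 : IntervalIntegrable (fun _ : ℝ => C) volume a r := intervalIntegrable_const
  have i4 : IntervalIntegrable (fun u : ℝ => D * u) volume a r :=
    (continuous_const.mul continuous_id).intervalIntegrable _ _
  rw [intervalIntegral.integral_add i1 i2, intervalIntegral.integral_add i3 i4,
    intervalIntegral.integral_const, intervalIntegral.integral_const_mul,
    intervalIntegral.integral_const_mul, integral_id, integral_pow]
  simp only [smul_eq_mul]
  push_cast
  ring

/-- Decomposition of the tent function. -/
private lemma tent_decomp {a r : ℝ} (har : a ≤ r) (u : ℝ) :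
    min (r - a) (max (r - u) 0) = (r - a) - max (u - a) 0 + max (u - r) 0 := by
  rcases le_total u a with h | h
  · rw [max_eq_right (by linarith : u - a ≤ 0), max_eq_right (by linarith : u - r ≤ 0),
      max_eq_left (by linarith : (0:ℝ) ≤ r - u), min_eq_left (by linarith)]
    ring
  · rcases le_total u r with h2 | h2
    · rw [max_eq_left (by linarith : u - a ≥ 0), max_eq_right (by linarith : u - r ≤ 0),
        max_eq_left (by linarith : (0:ℝ) ≤ r - u), min_eq_right (by linarith)]
      ring
    · rw [max_eq_left (by linarith : u - a ≥ 0), max_eq_left (by linarith : u - r ≥ 0),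
        max_eq_right (by linarith : r - u ≤ 0), min_eq_right (by linarith)]
      ring

/-- Forward integral inequality for the least squares estimator:
`∫_{t_k}^r 𝔽 ≤ ∫_{t_k}^r F̂` for all `r ∈ (t_k, t_{k+1}]`, where `F̂(u) = ∫_0^u f̂`. -/
theorem lse_forward_integral_inequality
    (n : ℕ) (hn : 1 ≤ n) (x : Fin n → ℝ) (hx : ∀ i, 0 < x i)
    (EDF : ℝ → ℝ)
    (hEDF : ∀ r : ℝ, EDF r = (n : ℝ)⁻¹ * (Finset.univ.filter fun i => x i ≤ r).card)
    (fhat : ℝ → ℝ)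
    (hfconv : ConvexOn ℝ (Ici 0) fhat) (hfint : IntegrableOn fhat (Ici 0))
    (hfsq : IntegrableOn (fun y => fhat y ^ 2) (Ici 0))
    (hopt : ∀ h : ℝ → ℝ, ConvexOn ℝ (Ici 0) h → IntegrableOn h (Ici 0) →
      IntegrableOn (fun y => h y ^ 2) (Ici 0) →
      (∫ y in Ici (0 : ℝ), fhat y ^ 2) - (2 / n) * ∑ i, fhat (x i) ≤
        (∫ y in Ici (0 : ℝ), h y ^ 2) - (2 / n) * ∑ i, h (x i))
    (m : ℕ) (t : ℕ → ℝ)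
    (ht0 : t 0 = 0) (htlt : ∀ k, k < m → t k < t (k + 1))
    (htmax : ∀ i, x i < t m)
    (haff : ∀ k, 1 ≤ k → k ≤ m → ∃ α β : ℝ,
      ∀ y ∈ Icc (t (k - 1)) (t k), fhat y = α * y + β)
    (htail : ∀ y, t m ≤ y → fhat y = 0)
    (hkink : ∀ k, 1 ≤ k → k ≤ m →
      derivWithin fhat (Iic (t k)) (t k) < derivWithin fhat (Ici (t k)) (t k)) :
    ∀ k, k < m → ∀ r ∈ Ioc (t k) (t (k + 1)),
      ∫ u in (t k)..r, EDF u ≤ ∫ u in (t k)..r, (∫ v in (0 : ℝ)..u, fhat v) := by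
  intro k hkm r hr
  obtain ⟨har, hrb⟩ := hr
  set a : ℝ := t k with ha_def
  -- nonnegativity of grid points
  have htnn : ∀ j, j ≤ m → 0 ≤ t j := by
    intro j hj
    induction j with
    | zero => rw [ht0]
    | succ i ih =>
      have hi : i < m := lt_of_lt_of_le (Nat.lt_succ_self i) hj
      exact le_of_lt (lt_of_le_of_lt (ih hi.le) (htlt i hi))
  have ha0 : (0:ℝ) ≤ a := htnn k hkm.le
  have h0r : (0:ℝ) ≤ r := le_trans ha0 har.le
  have hnpos : (0:ℝ) < n := by exact_mod_cast Nat.lt_of_lt_of_le Nat.zero_lt_one hn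
  -- the affine piece on [t k, t (k+1)]
  obtain ⟨α, β, hαβ₀⟩ := haff (k + 1) (Nat.le_add_left 1 k) hkm
  have hαβ : ∀ y ∈ Icc a (t (k + 1)), fhat y = α * y + β := by
    intro y hy
    apply hαβ₀
    simpa using hy
  -- the tent perturbation
  set Δ : ℝ → ℝ := fun u => min (r - a) (max (r - u) 0) with hΔ_def
  have hΔnonneg : ∀ u, 0 ≤ Δ u := fun u =>
    le_min (by linarith) (le_max_right _ _)
  have hΔle : ∀ u, Δ u ≤ r - a := fun u => min_le_left _ _
  have hΔbd : ∀ u, ‖Δ u‖ ≤ r - a := by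
    intro u
    rw [Real.norm_eq_abs, abs_of_nonneg (hΔnonneg u)]
    exact hΔle u
  have hΔcont : Continuous Δ :=
    continuous_const.min ((continuous_const.sub continuous_id).max continuous_const)
  have hΔIoi : ∀ u ∈ Ioi r, Δ u = 0 := by
    intro u hu
    rw [hΔ_def]
    dsimp only
    rw [max_eq_right (by simp only [mem_Ioi] at hu; linarith), min_eq_right (by linarith)]
  have hΔ_left : ∀ u : ℝ, u ≤ a → Δ u = r - a := by
    intro u hu
    rw [hΔ_def]
    dsimp only
    rw [max_eq_left (by linarith : (0:ℝ) ≤ r - u), min_eq_left (by linarith)]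
  have hΔ_mid : ∀ u : ℝ, a ≤ u → u ≤ r → Δ u = r - u := by
    intro u hu1 hu2
    rw [hΔ_def]
    dsimp only
    rw [max_eq_left (by linarith : (0:ℝ) ≤ r - u), min_eq_right (by linarith)]
  have hΔint : IntegrableOn Δ (Ici 0) := by
    rw [show Ici (0:ℝ) = Icc 0 r ∪ Ioi r from (Icc_union_Ioi_eq_Ici h0r).symm]
    exact (hΔcont.integrableOn_Icc).union
      ((integrableOn_congr_fun hΔIoi measurableSet_Ioi).mpr (integrableOn_zero))
  have hfΔ : IntegrableOn (fun u => Δ u * fhat u) (Ici 0) :=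
    hfint.bdd_mul hΔcont.aestronglyMeasurable (Filter.Eventually.of_forall hΔbd)
  have hΔΔ : IntegrableOn (fun u => Δ u * Δ u) (Ici 0) :=
    hΔint.bdd_mul hΔcont.aestronglyMeasurable (Filter.Eventually.of_forall hΔbd)
  -- family of convex perturbed functions
  have hconvfam : ∃ δ : ℝ, 0 < δ ∧ ∀ ε : ℝ, 0 < ε → ε ≤ δ →
      ConvexOn ℝ (Ici 0) (fun u => fhat u + ε * Δ u) := by
    have hpart2 : ∀ ε : ℝ, 0 ≤ ε →
        ConvexOn ℝ (Ici 0) (fun u => ε * max (u - r) 0 + ε * (r - a)) := by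
      intro ε hε
      have h1 : ConvexOn ℝ (Ici 0) (fun u : ℝ => max (u - r) 0) := by
        have := (convexOn_affine (convex_Ici (0:ℝ)) 1 (-r)).sup
          (convexOn_const (0:ℝ) (convex_Ici 0))
        apply convexOn_congr' this
        intro u _
        show max (1 * u + -r) 0 = max (u - r) 0
        rw [show (1:ℝ) * u + -r = u - r from by ring]
      have h2 := (h1.smul hε).add_const (ε * (r - a))
      apply convexOn_congr' h2
      intro u _
      show ε • max (u - r) 0 + ε * (r - a) = ε * max (u - r) 0 + ε * (r - a)
      rw [smul_eq_mul]
    have hdecomp : ∀ ε : ℝ, ∀ u : ℝ,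
        (fhat u - ε * max (u - a) 0) + (ε * max (u - r) 0 + ε * (r - a))
          = fhat u + ε * Δ u := by
      intro ε u
      rw [hΔ_def]
      dsimp only
      rw [tent_decomp har.le u]
      ring
    rcases Nat.eq_zero_or_pos k with hk0 | hk1
    · -- k = 0 : the perturbation keeps convexity for every ε
      refine ⟨1, one_pos, fun ε hε _ => ?_⟩
      have ha0' : a = 0 := by rw [ha_def, hk0, ht0]
      have hpart1 : ConvexOn ℝ (Ici 0) (fun u => fhat u - ε * max (u - a) 0) := by
        have := hfconv.add (convexOn_affine (convex_Ici (0:ℝ)) (-ε) 0)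
        apply convexOn_congr' this
        intro u hu
        have hu0 : (0:ℝ) ≤ u := hu
        show fhat u + (-ε * u + 0) = fhat u - ε * max (u - a) 0
        rw [ha0', max_eq_left (by linarith : (0:ℝ) ≤ u - 0)]
        ring
      have := hpart1.add (hpart2 ε hε.le)
      apply convexOn_congr' this
      intro u _
      exact hdecomp ε u
    · -- k ≥ 1 : use the strict kink at t k
      obtain ⟨α₁, β₁, hαβ₁⟩ := haff k hk1 hkm.le
      have hprev : t (k - 1) < a := by
        have := htlt (k - 1) (by omega)
        rwa [show k - 1 + 1 = k from by omega] at this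
      have hd1 : derivWithin fhat (Iic a) a = α₁ := derivWithin_affine_left hprev hαβ₁
      have hd2 : derivWithin fhat (Ici a) a = α := derivWithin_affine_right (htlt k hkm) hαβ
      have hgap : α₁ < α := by
        have := hkink k hk1 hkm.le
        rwa [← ha_def, hd1, hd2] at this
      refine ⟨α - α₁, by linarith, fun ε hε hεδ => ?_⟩
      have hpart1 : ConvexOn ℝ (Ici 0) (fun u => fhat u - ε * max (u - a) 0) :=
        convexOn_sub_kink hfconv (htnn (k - 1) (by omega)) hprev (htlt k hkm)
          hαβ₁ hαβ hε.le (by linarith)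
      have := hpart1.add (hpart2 ε hε.le)
      apply convexOn_congr' this
      intro u _
      exact hdecomp ε u
  obtain ⟨δ, hδpos, hδconv⟩ := hconvfam
  -- abbreviations
  set T : ℝ := ∑ i, Δ (x i) with hT_def
  set B : ℝ := ∫ u in Ici (0:ℝ), Δ u * fhat u with hB_def
  set C : ℝ := ∫ u in Ici (0:ℝ), Δ u * Δ u with hC_def
  -- first-order condition
  have key : ∀ ε : ℝ, 0 < ε → ε ≤ δ → (n:ℝ)⁻¹ * T ≤ B + (ε / 2) * C := by
    intro ε hε hεδ
    have hconv := hδconv ε hε hεδ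
    have hint : IntegrableOn (fun u => fhat u + ε * Δ u) (Ici 0) :=
      hfint.add (hΔint.const_mul ε)
    have hsq_eq : ∀ u : ℝ, (fhat u + ε * Δ u) ^ 2
        = fhat u ^ 2 + (2 * ε) * (Δ u * fhat u) + ε ^ 2 * (Δ u * Δ u) := by
      intro u; ring
    have hsqint : IntegrableOn (fun u => (fhat u + ε * Δ u) ^ 2) (Ici 0) := by
      refine (integrableOn_congr_fun (fun u _ => hsq_eq u) measurableSet_Ici).mpr ?_
      exact (hfsq.add (hfΔ.const_mul (2 * ε))).add (hΔΔ.const_mul (ε ^ 2))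
    have hP := hopt (fun u => fhat u + ε * Δ u) hconv hint hsqint
    have I2 : IntegrableOn (fun u => 2 * ε * (Δ u * fhat u)) (Ici 0) :=
      hfΔ.const_mul (2 * ε)
    have I3 : IntegrableOn (fun u => ε ^ 2 * (Δ u * Δ u)) (Ici 0) :=
      hΔΔ.const_mul (ε ^ 2)
    have I12 : IntegrableOn (fun u => fhat u ^ 2 + 2 * ε * (Δ u * fhat u)) (Ici 0) :=
      hfsq.add I2
    have hIeq : (∫ y in Ici (0:ℝ), (fhat y + ε * Δ y) ^ 2)
        = (∫ y in Ici (0:ℝ), fhat y ^ 2) + (2 * ε) * B + ε ^ 2 * C := by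
      rw [setIntegral_congr_fun measurableSet_Ici (fun u _ => hsq_eq u),
        integral_add I12 I3, integral_add hfsq I2, integral_const_mul, integral_const_mul]
    have hSeq : ∑ i, (fhat (x i) + ε * Δ (x i)) = (∑ i, fhat (x i)) + ε * T := by
      rw [Finset.sum_add_distrib, ← Finset.mul_sum]
    rw [hIeq, hSeq] at hP
    have hP' : (2 / (n:ℝ)) * (ε * T) ≤ (2 * ε) * B + ε ^ 2 * C := by
      have : (2 / (n:ℝ)) * ((∑ i, fhat (x i)) + ε * T)
          = (2 / (n:ℝ)) * (∑ i, fhat (x i)) + (2 / (n:ℝ)) * (ε * T) := by ring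
      rw [this] at hP
      linarith
    have h2ε : (0:ℝ) < 2 * ε := by linarith
    rw [← mul_le_mul_iff_of_pos_left h2ε]
    calc (2 * ε) * ((n:ℝ)⁻¹ * T) = (2 / (n:ℝ)) * (ε * T) := by
          rw [div_eq_mul_inv]; ring
      _ ≤ (2 * ε) * B + ε ^ 2 * C := hP'
      _ = (2 * ε) * (B + ε / 2 * C) := by ring
  -- pass to the limit ε → 0
  have main : (n:ℝ)⁻¹ * T ≤ B := by
    have hC : 0 ≤ C :=
      setIntegral_nonneg measurableSet_Ici (fun u _ => mul_self_nonneg (Δ u))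
    refine le_of_forall_pos_le_add ?_
    intro η hη
    set ε : ℝ := min δ (2 * η / (C + 1)) with hε_def
    have hεpos : 0 < ε := lt_min hδpos (by positivity)
    have hεδ : ε ≤ δ := min_le_left _ _
    have hεη : ε / 2 * C ≤ η := by
      have h1 : ε ≤ 2 * η / (C + 1) := min_le_right _ _
      have h2 : 0 < C + 1 := by linarith
      rw [le_div_iff₀ h2] at h1
      nlinarith
    have := key ε hεpos hεδ
    linarith
  -- identify the LHS
  have hstep_int : ∀ c : ℝ, IntervalIntegrable (fun u : ℝ => if c ≤ u then (1:ℝ) else 0)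
      volume a r := fun c => (step_monotone c).intervalIntegrable
  have hTeq : (∫ u in a..r, EDF u) = (n:ℝ)⁻¹ * T := by
    have e1 : ∀ u : ℝ, EDF u = (n:ℝ)⁻¹ * ∑ i, (if x i ≤ u then (1:ℝ) else 0) := by
      intro u
      rw [hEDF u, Finset.card_filter]
      push_cast
      rfl
    rw [intervalIntegral.integral_congr (fun u _ => e1 u),
      intervalIntegral.integral_const_mul,
      intervalIntegral.integral_finset_sum (fun i _ => hstep_int (x i))]
    congr 1
    refine Finset.sum_congr rfl (fun i _ => ?_)
    exact step_integral har.le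
  -- identify B as the RHS
  have hfsub : ∀ p q : ℝ, 0 ≤ p → 0 ≤ q → IntervalIntegrable fhat volume p q := by
    intro p q hp hq
    rw [intervalIntegrable_iff]
    refine hfint.mono_set (fun u hu => ?_)
    rcases hu with ⟨h1, _⟩
    have : (0:ℝ) ≤ min p q := le_min hp hq
    exact le_of_lt (lt_of_le_of_lt this h1)
  set c₀ : ℝ := ∫ v in (0:ℝ)..a, fhat v with hc₀_def
  -- split B over the three regions
  have hd1 : Disjoint (Ico (0:ℝ) a) (Ici a) :=
    disjoint_left.mpr (fun u hu hu' => absurd hu' (not_le.mpr hu.2))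
  have hd2 : Disjoint (Icc a r) (Ioi r) :=
    disjoint_left.mpr (fun u hu hu' => absurd hu.2 (not_le.mpr hu'))
  have hsplit : B = (∫ u in Ico 0 a, Δ u * fhat u)
      + ((∫ u in Icc a r, Δ u * fhat u) + (∫ u in Ioi r, Δ u * fhat u)) := by
    rw [hB_def, show Ici (0:ℝ) = Ico 0 a ∪ Ici a from (Ico_union_Ici_eq_Ici ha0).symm,
      setIntegral_union hd1 measurableSet_Ici
        (hfΔ.mono_set (fun u hu => hu.1))
        (hfΔ.mono_set (fun u hu => le_trans ha0 hu)),
      show Ici a = Icc a r ∪ Ioi r from (Icc_union_Ioi_eq_Ici har.le).symm,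
      setIntegral_union hd2 measurableSet_Ioi
        (hfΔ.mono_set (fun u hu => le_trans ha0 hu.1))
        (hfΔ.mono_set (fun u hu => le_trans h0r (le_of_lt hu)))]
  have hP1 : (∫ u in Ico (0:ℝ) a, Δ u * fhat u) = (r - a) * c₀ := by
    have e : EqOn (fun u => Δ u * fhat u) (fun u => (r - a) * fhat u) (Ico 0 a) := by
      intro u hu
      dsimp only
      rw [hΔ_left u hu.2.le]
    rw [setIntegral_congr_fun measurableSet_Ico e, integral_const_mul]
    congr 1
    rw [hc₀_def, intervalIntegral.integral_of_le ha0, integral_Ioc_eq_integral_Ioo,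
      integral_Ico_eq_integral_Ioo]
  have hP3 : (∫ u in Ioi r, Δ u * fhat u) = 0 := by
    have e : EqOn (fun u => Δ u * fhat u) (fun _ => (0:ℝ)) (Ioi r) := by
      intro u hu
      dsimp only
      rw [hΔIoi u hu, zero_mul]
    rw [setIntegral_congr_fun measurableSet_Ioi e, integral_zero]
  have hP2 : (∫ u in Icc a r, Δ u * fhat u) = ∫ u in a..r, (r - u) * (α * u + β) := by
    have e : EqOn (fun u => Δ u * fhat u) (fun u => (r - u) * (α * u + β)) (Icc a r) := by
      intro u hu
      rcases hu with ⟨h1, h2⟩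
      dsimp only
      rw [hΔ_mid u h1 h2, hαβ u ⟨h1, le_trans h2 hrb⟩]
    rw [setIntegral_congr_fun measurableSet_Icc e, integral_Icc_eq_integral_Ioc,
      ← intervalIntegral.integral_of_le har.le]
  -- compute the RHS
  have hF : ∀ u, u ∈ Icc a r →
      (∫ v in (0:ℝ)..u, fhat v) = c₀ + (α / 2 * u ^ 2 + β * u - (α / 2 * a ^ 2 + β * a)) := by
    intro u hu
    rcases hu with ⟨h1, h2⟩
    have hu0 : (0:ℝ) ≤ u := le_trans ha0 h1
    rw [← intervalIntegral.integral_add_adjacent_intervals (hfsub 0 a (le_refl 0) ha0)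
      (hfsub a u ha0 hu0), ← hc₀_def]
    have e : ∀ v ∈ Set.uIcc a u, fhat v = α * v + β := by
      intro v hv
      rw [Set.uIcc_of_le h1] at hv
      exact hαβ v ⟨hv.1, le_trans hv.2 (le_trans h2 hrb)⟩
    rw [intervalIntegral.integral_congr e]
    have e2 : (∫ v in a..u, (α * v + β))
        = ∫ v in a..u, (β + α * v + 0 * v ^ 2) := by
      apply intervalIntegral.integral_congr
      intro v _
      ring
    rw [e2, poly_integral]
    ring
  have hRHS : (∫ u in a..r, (∫ v in (0:ℝ)..u, fhat v))
      = ∫ u in a..r, ((c₀ - α / 2 * a ^ 2 - β * a) + β * u + (α / 2) * u ^ 2) := by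
    apply intervalIntegral.integral_congr
    intro u hu
    rw [Set.uIcc_of_le har.le] at hu
    dsimp only
    rw [hF u hu]
    ring
  have hB2 : (∫ u in a..r, (r - u) * (α * u + β))
      = ∫ u in a..r, (r * β + (r * α - β) * u + (-α) * u ^ 2) := by
    apply intervalIntegral.integral_congr
    intro u _
    dsimp only
    ring
  calc (∫ u in a..r, EDF u) = (n:ℝ)⁻¹ * T := hTeq
    _ ≤ B := main
    _ = (∫ u in a..r, (∫ v in (0:ℝ)..u, fhat v)) := by
        rw [hsplit, hP1, hP2, hP3, hRHS, hB2, poly_integral, poly_integral]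
        ring
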